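/- (Generalized Giambelli identity) Let a_1,…,a_n be distinct nonzero elements of a field and let J = (j_1,…,j_n) ∈ ℤ^n be arbitrary. Then 𝔊_J(A) = det( 𝔊_{(0^{l−1}, j_k + k − l, 0^{n−l})}(A) )_{1≤l,k≤n}. -/

import Mathlib

open Finset Matrix

/-- The generalized bialternant `𝔊_c(A) = det(aₜ^{c_s+s−1}) / det(aₜ^{s−1})`. -/
noncomputable def genSchur {K : Type*} [Field K] {n : ℕ} (x : Fin n → K)
    (c : Fin n → ℤ) : K :=
  (Matrix.of fun s t : Fin n => x t ^ (c s + (s : ℤ))).det /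
    (Matrix.of fun s t : Fin n => x t ^ ((s : ℕ) : ℤ)).det

lemma det_updateRow_eq_sum {K : Type*} [CommRing K] {n : ℕ}
    (V : Matrix (Fin n) (Fin n) K) (l : Fin n) (v : Fin n → K) :
    (V.updateRow l v).det = ∑ t, V.adjugate t l * v t := by
  rw [← Matrix.det_transpose, ← Matrix.updateCol_transpose, ← Matrix.cramer_apply,
    Matrix.cramer_eq_adjugate_mulVec, ← Matrix.adjugate_transpose]
  simp [Matrix.mulVec, dotProduct]

/-- Generalized Giambelli identity:
`𝔊_J(A) = det( 𝔊_{(0^{l−1}, j_k + k − l, 0^{n−l})}(A) )_{l,k}` for any `J ∈ ℤⁿ`. -/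
theorem generalized_giambelli {K : Type*} [Field K] {n : ℕ}
    (a : Fin n → K) (ha : Function.Injective a) (h0 : ∀ i, a i ≠ 0)
    (J : Fin n → ℤ) :
    genSchur a J =
      (Matrix.of fun l k : Fin n =>
        genSchur a (fun s => if s = l then J k + (k : ℤ) - (l : ℤ) else 0)).det := by
  rcases n with _ | m
  · simp [genSchur, Matrix.det_fin_zero]
  set V : Matrix (Fin (m + 1)) (Fin (m + 1)) K :=
    Matrix.of fun s t => a t ^ ((s : ℕ) : ℤ) with hVdef
  have hV : V.det ≠ 0 := by
    have hVv : V = (Matrix.vandermonde a)ᵀ := by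
      ext s t
      simp [hVdef, Matrix.vandermonde, zpow_natCast]
    rw [hVv, Matrix.det_transpose, Matrix.det_vandermonde]
    refine Finset.prod_ne_zero_iff.2 fun i _ => Finset.prod_ne_zero_iff.2 fun j hj => ?_
    exact sub_ne_zero_of_ne fun h => absurd (ha h) (Finset.mem_Ioi.mp hj).ne'
  have hentry : ∀ l k : Fin (m + 1),
      (Matrix.of fun s t : Fin (m + 1) =>
        a t ^ ((if s = l then J k + (k : ℤ) - (l : ℤ) else 0) + (s : ℤ))) =
      V.updateRow l (fun t => a t ^ (J k + (k : ℤ))) := by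
    intro l k
    ext s t
    by_cases h : s = l
    · subst h; simp [Matrix.updateRow_self]
    · simp [Matrix.updateRow_ne h, h, hVdef]
  set W : Matrix (Fin (m + 1)) (Fin (m + 1)) K :=
    Matrix.of fun t k => a t ^ (J k + (k : ℤ)) with hWdef
  have hN : ∀ l k : Fin (m + 1), (V.updateRow l fun t => a t ^ (J k + (k : ℤ))).det =
      ((V.adjugate)ᵀ * W) l k := by
    intro l k
    rw [det_updateRow_eq_sum]
    simp [Matrix.mul_apply, hWdef]
  have key : (Matrix.of fun l k : Fin (m + 1) =>
      genSchur a (fun s => if s = l then J k + (k : ℤ) - (l : ℤ) else 0)) =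
      (V.det)⁻¹ • ((V.adjugate)ᵀ * W) := by
    ext l k
    simp only [Matrix.of_apply, genSchur, Matrix.smul_apply, smul_eq_mul]
    rw [hentry l k, hN l k, div_eq_inv_mul]
  have hWnum : W = (Matrix.of fun s t : Fin (m + 1) => a t ^ (J s + (s : ℤ)))ᵀ := by
    ext t k; simp [hWdef]
  rw [key, Matrix.det_smul, Matrix.det_mul, Matrix.det_transpose, Matrix.det_adjugate,
    hWnum, Matrix.det_transpose]
  simp only [Fintype.card_fin, Nat.add_sub_cancel]
  rw [genSchur, div_eq_inv_mul]
  have hVV : (Matrix.of fun s t : Fin (m + 1) => a t ^ ((s : ℕ) : ℤ)) = V := rfl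
  rw [hVV]
  field_simp
  ring
  have hd : V.det * V.det ^ m ≠ 0 := mul_ne_zero hV (pow_ne_zero m hV)
  calc _ = (V.det * V.det ^ m) * (V.det * V.det ^ m)⁻¹ *
        (of fun s t : Fin (m + 1) => a t ^ (J s + (s : ℤ))).det := by
          rw [mul_inv_cancel₀ hd, one_mul]
    _ = _ := by ring
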